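/- If G = (V,E) is a subgraph of the n-dimensional Hamming cube, then |V| ≥ 2^{|E|/|V|}. -/
import Mathlib


open Matrix MeasureTheory

/-- A blocky matrix: its support is a disjoint union of combinatorial rectangles,
with value 1 on the support and 0 elsewhere. -/
def IsBlocky {F : Type*} [Field F] {m n : Type*} (M : Matrix m n F) : Prop :=
  ∃ (k : ℕ) (S : Fin k → Finset m) (T : Fin k → Finset n),
    (∀ a b, a ≠ b → Disjoint (S a) (S b)) ∧
    (∀ a b, a ≠ b → Disjoint (T a) (T b)) ∧
    (∀ i j, (∃ l, i ∈ S l ∧ j ∈ T l) → M i j = 1) ∧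
    (∀ i j, (¬ ∃ l, i ∈ S l ∧ j ∈ T l) → M i j = 0)

/-- A spiky matrix: the entrywise product of a blocky matrix and a rank-one matrix. -/
def IsSpiky {F : Type*} [Field F] {m n : Type*} (M : Matrix m n F) : Prop :=
  ∃ (B : Matrix m n F) (u : m → F) (v : n → F),
    IsBlocky B ∧ ∀ i j, M i j = B i j * (u i * v j)

/-- The spiky rank: minimum number of spiky matrices summing to `M`. -/
noncomputable def spikyRank {F : Type*} [Field F] {m n : Type*} (M : Matrix m n F) : ℕ :=
  sInf {r | ∃ f : Fin r → Matrix m n F, (∀ i, IsSpiky (f i)) ∧ ∑ i, f i = M}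

/-- The blocky rank: minimum number of blocky matrices whose linear combination equals `M`. -/
noncomputable def blockyRank {F : Type*} [Field F] {m n : Type*} (M : Matrix m n F) : ℕ :=
  sInf {r | ∃ (f : Fin r → Matrix m n F) (c : Fin r → F),
    (∀ i, IsBlocky (f i)) ∧ ∑ i, c i • f i = M}

/-- Sparsity: the number of nonzero entries of a matrix. -/
noncomputable def matSparsity {F : Type*} [Zero F] {m n : Type*} (M : Matrix m n F) : ℕ :=
  {p : m × n | M p.1 p.2 ≠ 0}.ncard

/-- Rank-`r` rigidity: minimum number of entries that must be changed to bring the rank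
down to `r`. -/
noncomputable def rigidity {F : Type*} [Field F] {N : ℕ}
    (M : Matrix (Fin N) (Fin N) F) (r : ℕ) : ℕ :=
  sInf {s | ∃ A C : Matrix (Fin N) (Fin N) F, M = A + C ∧ A.rank ≤ r ∧ matSparsity C ≤ s}

/-- Sign spiky rank: minimum spiky rank over real matrices with the same sign pattern. -/
noncomputable def signSpikyRank {m n : Type*} (M : Matrix m n ℝ) : ℕ :=
  sInf {r | ∃ A : Matrix m n ℝ,
    (∀ i j, Real.sign (A i j) = Real.sign (M i j)) ∧ spikyRank A ≤ r}

/-- Blocky cover number: minimum number of blocky matrices whose supports' union is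
exactly the set of 1-entries of the Boolean matrix `M`. -/
noncomputable def blockyCover {m n : Type*} (M : Matrix m n ℝ) : ℕ :=
  sInf {k | ∃ f : Fin k → Matrix m n ℝ, (∀ l, IsBlocky (f l)) ∧
    ∀ i j, M i j = 1 ↔ ∃ l, f l i j = 1}


lemma update_of_dist_one {n : ℕ} {x y : Fin n → Bool} (h : hammingDist x y = 1) {i : Fin n}
    (hi : x i ≠ y i) : y = Function.update x i (y i) := by
  funext j
  rcases eq_or_ne j i with rfl | hj
  · simp
  · rw [Function.update_of_ne hj]
    by_contra hne
    have hcard : (Finset.univ.filter fun t => x t ≠ y t).card = 1 := h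
    obtain ⟨a, ha⟩ := Finset.card_eq_one.mp hcard
    have h1 : i ∈ Finset.univ.filter fun t => x t ≠ y t := by simp [hi]
    have h2 : j ∈ Finset.univ.filter fun t => x t ≠ y t := by simp [Ne.symm hne]
    rw [ha] at h1 h2
    simp at h1 h2
    exact hj (h2.trans h1.symm)

lemma arith_step {a b e0 e1 ec : ℝ} (ha : 1 ≤ a) (hb : 1 ≤ b)
    (h0 : e0 ≤ a * Real.logb 2 a) (h1 : e1 ≤ b * Real.logb 2 b)
    (hc : ec ≤ min a b) :
    e0 + e1 + ec ≤ (a + b) * Real.logb 2 (a + b) := by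
  wlog hab : a ≤ b generalizing a b e0 e1
  · have := this hb ha h1 h0 (by rwa [min_comm]) (le_of_not_ge hab)
    rw [add_comm b a] at this
    linarith
  have ha0 : (0:ℝ) < a := by linarith
  have hb0 : (0:ℝ) < b := by linarith
  have h22 : Real.logb 2 2 = 1 := by simp
  have key : a * Real.logb 2 a + a = a * Real.logb 2 (2*a) := by
    rw [Real.logb_mul (by norm_num) ha0.ne', h22]; ring
  have h2a : Real.logb 2 (2*a) ≤ Real.logb 2 (a+b) :=
    Real.logb_le_logb_of_le (by norm_num) (by linarith) (by linarith)
  have hbl : Real.logb 2 b ≤ Real.logb 2 (a+b) :=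
    Real.logb_le_logb_of_le (by norm_num) hb0 (by linarith)
  rw [min_eq_left hab] at hc
  nlinarith [h2a, hbl, ha0, hb0, key]

lemma hamming_edge_bound (n : ℕ) :
    ∀ (k : ℕ) (V : Finset (Fin n → Bool)) (E : Finset (Sym2 (Fin n → Bool))),
    V.card ≤ k →
    (∀ e ∈ E, ∃ x y, e = s(x, y) ∧ x ∈ V ∧ y ∈ V ∧ hammingDist x y = 1) →
    (E.card : ℝ) ≤ V.card * Real.logb 2 V.card := by
  intro k
  induction k with
  | zero =>
    intro V E hk hE
    have hV : V = ∅ := Finset.card_eq_zero.mp (Nat.le_zero.mp hk)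
    subst hV
    have hEe : E = ∅ := by
      rw [Finset.eq_empty_iff_forall_notMem]
      intro e he
      obtain ⟨x, y, _, hx, _, _⟩ := hE e he
      simp at hx
    simp [hEe]
  | succ k ih =>
    intro V E hk hE
    classical
    by_cases htriv : ∀ x ∈ V, ∀ y ∈ V, x = y
    · have hEe : E = ∅ := by
        rw [Finset.eq_empty_iff_forall_notMem]
        intro e he
        obtain ⟨x, y, _, hx, hy, hd⟩ := hE e he
        rw [htriv x hx y hy] at hd
        simp at hd
      have hV1 : V.card ≤ 1 := Finset.card_le_one.mpr (fun a ha b hb => htriv a ha b hb)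
      interval_cases h : V.card <;> simp [hEe]
    · push_neg at htriv
      obtain ⟨x₀, hx₀, y₀, hy₀, hxy⟩ := htriv
      obtain ⟨i, hi⟩ := Function.ne_iff.mp hxy
      set V0 := V.filter (fun v => v i = false) with hV0def
      set V1 := V.filter (fun v => v i = true) with hV1def
      set E0 := E.filter (fun e => ∀ z ∈ e, z i = false) with hE0def
      set E1 := E.filter (fun e => ∀ z ∈ e, z i = true) with hE1def
      set Ec := E.filter (fun e => ¬(∀ z ∈ e, z i = false) ∧ ¬(∀ z ∈ e, z i = true)) with hEcdef
      have hmemsplit : ∀ v ∈ V, v ∈ V0 ∨ v ∈ V1 := by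
        intro v hv
        cases hvi : v i
        · left; simp [hV0def, Finset.mem_filter, hv, hvi]
        · right; simp [hV1def, Finset.mem_filter, hv, hvi]
      have hV0ne : V0.Nonempty := by
        rcases hmemsplit x₀ hx₀ with h | h
        · exact ⟨x₀, h⟩
        · rcases hmemsplit y₀ hy₀ with h' | h'
          · exact ⟨y₀, h'⟩
          · exfalso
            simp [hV1def, Finset.mem_filter] at h h'
            exact hi (h.2.trans h'.2.symm)
      have hV1ne : V1.Nonempty := by
        rcases hmemsplit x₀ hx₀ with h | h
        · rcases hmemsplit y₀ hy₀ with h' | h'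
          · exfalso
            simp [hV0def, Finset.mem_filter] at h h'
            exact hi (h.2.trans h'.2.symm)
          · exact ⟨y₀, h'⟩
        · exact ⟨x₀, h⟩
      have hVsum : V0.card + V1.card = V.card := by
        rw [hV0def, hV1def]
        have hcongr : V.filter (fun v => v i = true) = V.filter (fun v => ¬ v i = false) :=
          Finset.filter_congr (fun v _ => by cases v i <;> simp)
        rw [hcongr]
        exact Finset.card_filter_add_card_filter_not _
      have hV0k : V0.card ≤ k := by
        have := hV1ne.card_pos; omega
      have hV1k : V1.card ≤ k := by
        have := hV0ne.card_pos; omega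
      -- edge hypotheses for sub-cubes
      have hE0h : ∀ e ∈ E0, ∃ x y, e = s(x, y) ∧ x ∈ V0 ∧ y ∈ V0 ∧ hammingDist x y = 1 := by
        intro e he
        rw [hE0def, Finset.mem_filter] at he
        obtain ⟨heE, hall⟩ := he
        obtain ⟨x, y, rfl, hx, hy, hd⟩ := hE _ heE
        exact ⟨x, y, rfl,
          Finset.mem_filter.mpr ⟨hx, hall x (by simp)⟩,
          Finset.mem_filter.mpr ⟨hy, hall y (by simp)⟩, hd⟩
      have hE1h : ∀ e ∈ E1, ∃ x y, e = s(x, y) ∧ x ∈ V1 ∧ y ∈ V1 ∧ hammingDist x y = 1 := by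
        intro e he
        rw [hE1def, Finset.mem_filter] at he
        obtain ⟨heE, hall⟩ := he
        obtain ⟨x, y, rfl, hx, hy, hd⟩ := hE _ heE
        exact ⟨x, y, rfl,
          Finset.mem_filter.mpr ⟨hx, hall x (by simp)⟩,
          Finset.mem_filter.mpr ⟨hy, hall y (by simp)⟩, hd⟩
      have ih0 := ih V0 E0 hV0k hE0h
      have ih1 := ih V1 E1 hV1k hE1h
      -- crossing edges bound
      have hEcV0 : Ec ⊆ V0.image (fun v => s(v, Function.update v i true)) := by
        intro e he
        rw [hEcdef, Finset.mem_filter] at he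
        obtain ⟨heE, hnp0, hnp1⟩ := he
        obtain ⟨x, y, rfl, hx, hy, hd⟩ := hE _ heE
        have hxyne : x i ≠ y i := by
          intro hsame
          cases hxi : x i
          · exact hnp0 (fun z hz => by
              rcases Sym2.mem_iff.mp hz with rfl | rfl
              · exact hxi
              · rw [← hsame]; exact hxi)
          · exact hnp1 (fun z hz => by
              rcases Sym2.mem_iff.mp hz with rfl | rfl
              · exact hxi
              · rw [← hsame]; exact hxi)
        cases hxi : x i
        · have hyi : y i = true := by
            cases h : y i
            · exact absurd (hxi.trans h.symm) hxyne
            · rfl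
          have hupd := update_of_dist_one hd hxyne
          rw [hyi] at hupd
          refine Finset.mem_image.mpr ⟨x, Finset.mem_filter.mpr ⟨hx, hxi⟩, ?_⟩
          rw [← hupd]
        · have hyi : y i = false := by
            cases h : y i
            · rfl
            · exact absurd (hxi.trans h.symm) hxyne
          have hd' : hammingDist y x = 1 := by rwa [hammingDist_comm]
          have hupd := update_of_dist_one hd' (Ne.symm hxyne)
          rw [hxi] at hupd
          refine Finset.mem_image.mpr ⟨y, Finset.mem_filter.mpr ⟨hy, hyi⟩, ?_⟩
          rw [← hupd, Sym2.eq_swap]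
      have hEcV1 : Ec ⊆ V1.image (fun v => s(v, Function.update v i false)) := by
        intro e he
        rw [hEcdef, Finset.mem_filter] at he
        obtain ⟨heE, hnp0, hnp1⟩ := he
        obtain ⟨x, y, rfl, hx, hy, hd⟩ := hE _ heE
        have hxyne : x i ≠ y i := by
          intro hsame
          cases hxi : x i
          · exact hnp0 (fun z hz => by
              rcases Sym2.mem_iff.mp hz with rfl | rfl
              · exact hxi
              · rw [← hsame]; exact hxi)
          · exact hnp1 (fun z hz => by
              rcases Sym2.mem_iff.mp hz with rfl | rfl
              · exact hxi
              · rw [← hsame]; exact hxi)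
        cases hxi : x i
        · have hyi : y i = true := by
            cases h : y i
            · exact absurd (hxi.trans h.symm) hxyne
            · rfl
          have hd' : hammingDist y x = 1 := by rwa [hammingDist_comm]
          have hupd := update_of_dist_one hd' (Ne.symm hxyne)
          rw [hxi] at hupd
          refine Finset.mem_image.mpr ⟨y, Finset.mem_filter.mpr ⟨hy, hyi⟩, ?_⟩
          rw [← hupd, Sym2.eq_swap]
        · have hyi : y i = false := by
            cases h : y i
            · rfl
            · exact absurd (hxi.trans h.symm) hxyne
          have hupd := update_of_dist_one hd hxyne
          rw [hyi] at hupd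
          refine Finset.mem_image.mpr ⟨x, Finset.mem_filter.mpr ⟨hx, hxi⟩, ?_⟩
          rw [← hupd]
      have hc0 : Ec.card ≤ V0.card :=
        (Finset.card_le_card hEcV0).trans Finset.card_image_le
      have hc1 : Ec.card ≤ V1.card :=
        (Finset.card_le_card hEcV1).trans Finset.card_image_le
      -- partition of E
      have hdisj01 : Disjoint E0 E1 := by
        rw [Finset.disjoint_left]
        intro e h0 h1
        rw [hE0def, Finset.mem_filter] at h0
        rw [hE1def, Finset.mem_filter] at h1
        obtain ⟨x, y, rfl, _, _, _⟩ := hE _ h0.1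
        have := h0.2 x (by simp)
        have := h1.2 x (by simp)
        simp_all
      have hdisjUc : Disjoint (E0 ∪ E1) Ec := by
        rw [Finset.disjoint_left]
        intro e h0 h1
        rw [hEcdef, Finset.mem_filter] at h1
        rcases Finset.mem_union.mp h0 with h | h
        · exact h1.2.1 (Finset.mem_filter.mp h).2
        · exact h1.2.2 (Finset.mem_filter.mp h).2
      have hEun : E0 ∪ E1 ∪ Ec = E := by
        ext e
        simp only [hE0def, hE1def, hEcdef, Finset.mem_union, Finset.mem_filter]
        tauto
      have hcardE : E.card = E0.card + E1.card + Ec.card := by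
        rw [← hEun, Finset.card_union_of_disjoint hdisjUc,
          Finset.card_union_of_disjoint hdisj01]
      -- conclude
      have ha : (1:ℝ) ≤ V0.card := by exact_mod_cast hV0ne.card_pos
      have hb : (1:ℝ) ≤ V1.card := by exact_mod_cast hV1ne.card_pos
      have hmin : (Ec.card : ℝ) ≤ min (V0.card : ℝ) (V1.card : ℝ) :=
        le_min (by exact_mod_cast hc0) (by exact_mod_cast hc1)
      have := arith_step ha hb ih0 ih1 hmin
      rw [← hVsum]
      push_cast
      calc (E.card : ℝ) = (E0.card : ℝ) + E1.card + Ec.card := by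
            rw [hcardE]; push_cast; ring
        _ ≤ _ := this

/-- Edge-isoperimetry in the Hamming cube: a subgraph with vertex set V and edge set E
satisfies |V| ≥ 2^(|E|/|V|). -/
theorem hamming_cube_subgraph_bound (n : ℕ)
    (V : Finset (Fin n → Bool)) (E : Finset (Sym2 (Fin n → Bool)))
    (hV : V.Nonempty)
    (hE : ∀ e ∈ E, ∃ x y, e = s(x, y) ∧ x ∈ V ∧ y ∈ V ∧ hammingDist x y = 1) :
    (2 : ℝ) ^ ((E.card : ℝ) / V.card) ≤ (V.card : ℝ) := by
  have hb := hamming_edge_bound n V.card V E le_rfl hE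
  have hVpos : (0:ℝ) < V.card := by exact_mod_cast hV.card_pos
  rw [mul_comm] at hb
  have hdiv : (E.card : ℝ) / V.card ≤ Real.logb 2 V.card := (div_le_iff₀ hVpos).mpr hb
  calc (2:ℝ) ^ ((E.card : ℝ) / V.card)
      ≤ (2:ℝ) ^ (Real.logb 2 (V.card : ℝ)) :=
        (Real.rpow_le_rpow_left_iff (by norm_num)).mpr hdiv
    _ = (V.card : ℝ) := Real.rpow_logb (by norm_num) (by norm_num) hVpos
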